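/- Let Γ be a finite set of predicates over D and let ≥ be defined on predicates by α ≥ β iff *α ⊇ *β. If c^ρ_{ij} ≤ 0 for all soft constraints, then the dynamic programming values W_s(α) = min over words x of length s with x ∈ *α of F_s(x) satisfy the recurrence W_s(α) = min{ min over edges (α,β) of the Hasse diagram of (closure(Γ^∩), ≥) of W_s(β), W_{s-1}(α⁻) + φ_s(α) }, where φ_s(α) = Σ over β ∈ Γ with β ≥ α and (β, s−‖β‖+1, s) in the instance of c^β_{s−‖β‖+1, s}. -/

import Mathlib

open scoped Classical

noncomputable section

/-- A predicate of arity `ar` over `D`: a set of words over `D`, all of length `ar`. -/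
structure GPred (D : Type*) where
  ar : ℕ
  s : Set (List D)
  len : ∀ w ∈ s, w.length = ar

namespace GPred

variable {D : Type*}

/-- `*α`: the set of words whose suffix of length `α.ar` lies in `α`. -/
def star (α : GPred D) : Set (List D) :=
  {w | α.ar ≤ w.length ∧ w.drop (w.length - α.ar) ∈ α.s}

/-- The operation `α | β`: restrict the longer predicate to tuples whose suffix lies
in the shorter one. -/
def bar (α β : GPred D) : GPred D :=
  if β.ar ≤ α.ar then
    ⟨α.ar, {w | w ∈ α.s ∧ w.drop (α.ar - β.ar) ∈ β.s}, fun w hw => α.len w hw.1⟩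
  else
    ⟨β.ar, {w | w ∈ β.s ∧ w.drop (β.ar - α.ar) ∈ α.s}, fun w hw => β.len w hw.1⟩

/-- `α⁻`: drop the last coordinate. -/
def minus (α : GPred D) : GPred D :=
  ⟨α.ar - 1, {w | ∃ a : D, w ++ [a] ∈ α.s}, by
    rintro w ⟨a, ha⟩
    have h := α.len _ ha
    simp at h
    omega⟩

/-- `α⁻ × {a}`. -/
def sufSingle (α : GPred D) (a : D) : GPred D :=
  ⟨α.ar, {w | ∃ w', (∃ b : D, w' ++ [b] ∈ α.s) ∧ w = w' ++ [a]}, by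
    rintro w ⟨w', ⟨b, hb⟩, rfl⟩
    have h := α.len _ hb
    simp at h ⊢
    omega⟩

/-- Prefix projection `α_{1:i}`. -/
def prefProj (α : GPred D) (i : ℕ) : GPred D :=
  ⟨i, {w | w.length = i ∧ ∃ t, w ++ t ∈ α.s}, fun _ hw => hw.1⟩

/-- Suffix projection of length `i`, i.e. `α_{‖α‖-i+1:‖α‖}`. -/
def sufProj (α : GPred D) (i : ℕ) : GPred D :=
  ⟨i, {w | w.length = i ∧ ∃ t, t ++ w ∈ α.s}, fun _ hw => hw.1⟩

/-- A predicate is simple if it is a cartesian product of subsets of `D`. -/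
def IsSimple (α : GPred D) : Prop :=
  ∃ Ωs : List (Set D), α.ar = Ωs.length ∧ α.s = {w | List.Forall₂ (· ∈ ·) w Ωs}

/-- `α ≥ β` iff `*α ⊇ *β`. -/
def pge (α β : GPred D) : Prop := β.star ⊆ α.star

/-- `α > β`. -/
def pgt (α β : GPred D) : Prop := pge α β ∧ α ≠ β

/-- `β ⊊ α`: strict inclusion of predicates of equal arity. -/
def pssub (β α : GPred D) : Prop := β.ar = α.ar ∧ β.s ⊂ α.s

/-- `α ≻ β` iff `‖β‖ > ‖α‖` and the suffix projection `β_{‖β‖-‖α‖+1:‖β‖} ⊆ α`. -/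
def psucc (α β : GPred D) : Prop := α.ar < β.ar ∧ (β.sufProj α.ar).s ⊆ α.s

/-- `α ⪰ β`. -/
def psucceq (α β : GPred D) : Prop := psucc α β ∨ α = β

def PrefClosed (G : Set (GPred D)) : Prop := ∀ ρ ∈ G, 1 ≤ ρ.ar → ρ.minus ∈ G

def InterClosed (G : Set (GPred D)) : Prop := ∀ α ∈ G, ∀ β ∈ G, α.bar β ∈ G

def SSClosed (G : Set (GPred D)) : Prop := ∀ ρ ∈ G, 1 ≤ ρ.ar → ∀ a : D, ρ.sufSingle a ∈ G

/-- `closure(Γ^∩)`: the smallest prefix- and intersection-closed superset of `Γ`. -/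
def piClosure (Γ : Set (GPred D)) : Set (GPred D) :=
  ⋂₀ {G | Γ ⊆ G ∧ PrefClosed G ∧ InterClosed G}

/-- `Γ*`: the smallest prefix-, intersection- and singleton-suffix-closed superset of `Γ`. -/
def fullClosure (Γ : Set (GPred D)) : Set (GPred D) :=
  ⋂₀ {G | Γ ⊆ G ∧ PrefClosed G ∧ InterClosed G ∧ SSClosed G}

/-- `Γ°`: the singleton suffix closure `Γ ∪ {ρ⁻ × {a} : ρ ∈ Γ, a ∈ D}`. -/
def sscSet (Γ : Set (GPred D)) : Set (GPred D) :=
  Γ ∪ {σ | ∃ ρ ∈ Γ, 1 ≤ ρ.ar ∧ ∃ a : D, σ = ρ.sufSingle a}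

/-- Edges of the Hasse diagram of `(G, ≥)`. -/
def HasseGe (G : Set (GPred D)) (α β : GPred D) : Prop :=
  α ∈ G ∧ β ∈ G ∧ pgt α β ∧ ¬ ∃ γ ∈ G, pgt α γ ∧ pgt γ β

/-- Edges of the Hasse diagram of `(G, ⊇)`. -/
def HasseSub (G : Set (GPred D)) (α β : GPred D) : Prop :=
  α ∈ G ∧ β ∈ G ∧ pssub β α ∧ ¬ ∃ γ ∈ G, pssub γ α ∧ pssub β γ

/-- Edges of the graph `G[G]`. -/
def EdgeG (G : Set (GPred D)) (α β : GPred D) : Prop :=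
  α ∈ G ∧ β ∈ G ∧ psucc α β ∧
    ¬ ∃ γ ∈ G, (psucc α γ ∧ psucc γ β) ∨ (pssub γ α ∧ psucc γ β)

/-- `X_s(α; G)`. -/
def X (s : ℕ) (α : GPred D) (G : Set (GPred D)) : Set (List D) :=
  {x | x.length = s ∧ x ∈ α.star ∧ ∀ β ∈ G, pgt α β → x ∉ β.star}

/-- `X_s(α)`. -/
def Xall (s : ℕ) (α : GPred D) : Set (List D) :=
  {x | x.length = s ∧ x ∈ α.star}

/-- Projection of `α` onto its last coordinate. -/
def projLast (α : GPred D) : Set D := {a | ∃ w, w ++ [a] ∈ α.s}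

/-- The cartesian-product predicate `Ω₁ × ⋯ × Ω_l`. -/
def predOfList (Ωs : List (Set D)) : GPred D :=
  ⟨Ωs.length, {w | List.Forall₂ (· ∈ ·) w Ωs}, fun _ hw => List.Forall₂.length_eq hw⟩

end GPred

namespace GPred

variable {D : Type*}

/-- The set `Λ` of constraint triples `(ρ, i, j)`: `ρ ∈ Γ`, `j - i = ‖ρ‖ - 1`,
`[i,j] ⊆ [1,n]`. -/
def Lam (Γ : Set (GPred D)) (n : ℕ) (ρ : GPred D) (i j : ℕ) : Prop :=
  ρ ∈ Γ ∧ 1 ≤ i ∧ j ≤ n ∧ j + 1 = i + ρ.ar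

/-- `f^ρ_{ij}(x_{i:j})`: the weight `c^ρ_{ij}` if `x_{i:j} ∈ ρ`, else `0`. -/
def fcost (c : GPred D → ℕ → ℕ → ℝ) (ρ : GPred D) (i j : ℕ) (x : List D) : ℝ :=
  if (x.drop (i - 1)).take ρ.ar ∈ ρ.s then c ρ i j else 0

/-- The partial cost `F_s(x)`: sum over constraints `(ρ,i,j) ∈ Λ` with `j ≤ s`. -/
def Fpart (Γ : Set (GPred D)) (n : ℕ) (c : GPred D → ℕ → ℕ → ℝ) (s : ℕ)
    (x : List D) : ℝ :=
  ∑ᶠ ρ : GPred D, ∑ᶠ i : ℕ, ∑ᶠ j : ℕ,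
    if Lam Γ n ρ i j ∧ j ≤ s then fcost c ρ i j x else 0

/-- `W_s(α) = min {F_s(x) : x ∈ D^s ∩ *α}` (as an infimum in `EReal`). -/
def W (Γ : Set (GPred D)) (n : ℕ) (c : GPred D → ℕ → ℕ → ℝ) (s : ℕ)
    (α : GPred D) : EReal :=
  sInf {z : EReal | ∃ x : List D, x.length = s ∧ x ∈ α.star ∧
    z = ((Fpart Γ n c s x : ℝ) : EReal)}

/-- `φ_s(α) = Σ_{β ∈ Γ, β ≥ α, (β, s-‖β‖+1, s) ∈ Λ} c^β_{s-‖β‖+1, s}`. -/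
def phi (Γ : Set (GPred D)) (n : ℕ) (c : GPred D → ℕ → ℕ → ℝ) (s : ℕ)
    (α : GPred D) : ℝ :=
  ∑ᶠ β : GPred D, ∑ᶠ i : ℕ,
    if β ∈ Γ ∧ pge β α ∧ Lam Γ n β i s then c β i s else 0

/-! ### Auxiliary lemmas -/

lemma ext' {α β : GPred D} (h1 : α.ar = β.ar) (h2 : α.s = β.s) : α = β := by
  cases α; cases β; simp_all

lemma self_mem_star {α : GPred D} {w : List D} (hw : w ∈ α.s) : w ∈ α.star := by
  have hl := α.len w hw
  refine ⟨le_of_eq hl.symm, ?_⟩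
  rw [hl, Nat.sub_self, List.drop_zero]
  exact hw

lemma eq_of_star_eq {α β : GPred D} (h : α.star = β.star) (hne : α.star.Nonempty) : α = β := by
  obtain ⟨w, hw⟩ := hne
  have hus : w.drop (w.length - α.ar) ∈ α.s := hw.2
  set u := w.drop (w.length - α.ar) with hu
  have key : ∀ γ δ : GPred D, γ.star = δ.star → ∀ v ∈ γ.s, δ.ar ≤ v.length := by
    intro γ δ hγδ v hv
    exact (hγδ ▸ self_mem_star hv : v ∈ δ.star).1
  have h1 : β.ar ≤ α.ar := by
    have := key α β h u hus; rwa [α.len u hus] at this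
  have hβne : β.s.Nonempty := by
    have : u ∈ β.star := h ▸ self_mem_star hus
    exact ⟨_, this.2⟩
  obtain ⟨v, hv⟩ := hβne
  have h2 : α.ar ≤ β.ar := by
    have := key β α h.symm v hv; rwa [β.len v hv] at this
  have har : α.ar = β.ar := le_antisymm h2 h1
  refine ext' har ?_
  ext y
  constructor
  · intro hy
    have h3 : y ∈ β.star := h ▸ self_mem_star hy
    have h4 := h3.2
    have h5 : y.length - β.ar = 0 := by rw [α.len y hy]; omega
    rwa [h5, List.drop_zero] at h4
  · intro hy
    have h3 : y ∈ α.star := h.symm ▸ self_mem_star hy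
    have h4 := h3.2
    have h5 : y.length - α.ar = 0 := by rw [β.len y hy]; omega
    rwa [h5, List.drop_zero] at h4

lemma star_bar_aux (α β : GPred D) (h : β.ar ≤ α.ar) :
    (GPred.mk α.ar {w | w ∈ α.s ∧ w.drop (α.ar - β.ar) ∈ β.s}
      (fun w hw => α.len w hw.1)).star = α.star ∩ β.star := by
  ext w
  simp only [star, Set.mem_setOf_eq, Set.mem_inter_iff]
  constructor
  · rintro ⟨hl, h1, h2⟩
    refine ⟨⟨hl, h1⟩, le_trans h hl, ?_⟩
    rw [List.drop_drop] at h2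
    have he : w.length - α.ar + (α.ar - β.ar) = w.length - β.ar := by omega
    rwa [he] at h2
  · rintro ⟨⟨hl, h1⟩, hl2, h2⟩
    refine ⟨hl, h1, ?_⟩
    rw [List.drop_drop]
    have he : w.length - α.ar + (α.ar - β.ar) = w.length - β.ar := by omega
    rwa [he]

lemma star_bar (α β : GPred D) : (α.bar β).star = α.star ∩ β.star := by
  rw [bar]
  split_ifs with h
  · exact star_bar_aux α β h
  · rw [star_bar_aux β α (by omega), Set.inter_comm]

lemma subset_piClosure (Γ : Set (GPred D)) : Γ ⊆ piClosure Γ := fun ρ hρ =>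
  Set.mem_sInter.2 fun _ hG => hG.1 hρ

lemma interClosed_piClosure (Γ : Set (GPred D)) : InterClosed (piClosure Γ) :=
  fun α hα β hβ => Set.mem_sInter.2 fun G hG =>
    hG.2.2 α (Set.mem_sInter.1 hα G hG) β (Set.mem_sInter.1 hβ G hG)

lemma finite_ar_le (D : Type*) [Fintype D] (N : ℕ) : {ρ : GPred D | ρ.ar ≤ N}.Finite := by
  have hL : {w : List D | w.length ≤ N}.Finite := List.finite_length_le D N
  have himg : ((fun ρ : GPred D => (ρ.ar, ρ.s)) '' {ρ | ρ.ar ≤ N}).Finite := by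
    refine Set.Finite.subset ((Set.finite_Iic N).prod hL.finite_subsets) ?_
    rintro p ⟨ρ, hρ, rfl⟩
    exact ⟨hρ, fun w hw => le_trans (le_of_eq (ρ.len w hw)) hρ⟩
  exact Set.Finite.of_finite_image himg fun ρ _ σ _ hh =>
    ext' (congrArg Prod.fst hh) (congrArg Prod.snd hh)

lemma W_le {Γ : Set (GPred D)} {n : ℕ} {c : GPred D → ℕ → ℕ → ℝ} {s : ℕ} {α : GPred D}
    {x : List D} (hx : x.length = s) (hxα : x ∈ α.star) :
    W Γ n c s α ≤ ((Fpart Γ n c s x : ℝ) : EReal) :=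
  sInf_le ⟨x, hx, hxα, rfl⟩

lemma W_mono {Γ : Set (GPred D)} {n : ℕ} {c : GPred D → ℕ → ℕ → ℝ} {s : ℕ}
    {α β : GPred D} (h : β.star ⊆ α.star) : W Γ n c s α ≤ W Γ n c s β :=
  sInf_le_sInf (by rintro z ⟨x, h1, h2, rfl⟩; exact ⟨x, h1, h h2, rfl⟩)

lemma W_attained [Fintype D] (Γ : Set (GPred D)) (n : ℕ) (c : GPred D → ℕ → ℕ → ℝ)
    (s : ℕ) (α : GPred D) (h : ∃ x : List D, x.length = s ∧ x ∈ α.star) :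
    ∃ x : List D, x.length = s ∧ x ∈ α.star ∧
      W Γ n c s α = ((Fpart Γ n c s x : ℝ) : EReal) := by
  obtain ⟨x₀, hx₀⟩ := h
  have hsub : {z : EReal | ∃ x : List D, x.length = s ∧ x ∈ α.star ∧
      z = ((Fpart Γ n c s x : ℝ) : EReal)} ⊆
      (fun x : List D => ((Fpart Γ n c s x : ℝ) : EReal)) '' {x | x.length = s} := by
    rintro z ⟨x, h1, h2, rfl⟩; exact ⟨x, h1, rfl⟩
  have hfin := ((List.finite_length_eq D s).image _).subset hsub
  have hmem := Set.Nonempty.csInf_mem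
    (s := {z : EReal | ∃ x : List D, x.length = s ∧ x ∈ α.star ∧
      z = ((Fpart Γ n c s x : ℝ) : EReal)})
    ⟨_, x₀, hx₀.1, hx₀.2, rfl⟩ hfin
  exact hmem

lemma exists_extension {α : GPred D} (har : 1 ≤ α.ar) {x' : List D}
    (hmem : x' ∈ α.minus.star) : ∃ a : D, x' ++ [a] ∈ α.star := by
  obtain ⟨h1, h2⟩ := hmem
  have h1' : α.ar - 1 ≤ x'.length := h1
  obtain ⟨a, ha⟩ := h2
  refine ⟨a, ?_, ?_⟩
  · simp only [List.length_append, List.length_singleton]; omega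
  · have hle : (x' ++ [a]).length - α.ar ≤ x'.length := by
      simp only [List.length_append, List.length_singleton]; omega
    rw [List.drop_append_of_le_length hle]
    have he : (x' ++ [a]).length - α.ar = x'.length - (α.ar - 1) := by
      simp only [List.length_append, List.length_singleton]; omega
    rw [he]
    exact ha

lemma mem_minus_star {α : GPred D} (har : 1 ≤ α.ar) {x' : List D} {a : D}
    (h : x' ++ [a] ∈ α.star) : x' ∈ α.minus.star := by
  obtain ⟨h1, h2⟩ := h
  have h1' : α.ar ≤ x'.length + 1 := by
    simpa only [List.length_append, List.length_singleton] using h1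
  refine ⟨?_, ?_⟩
  · show α.ar - 1 ≤ x'.length; omega
  · show x'.drop (x'.length - (α.ar - 1)) ∈ α.minus.s
    refine ⟨a, ?_⟩
    have hle : (x' ++ [a]).length - α.ar ≤ x'.length := by
      simp only [List.length_append, List.length_singleton]; omega
    rw [List.drop_append_of_le_length hle] at h2
    have he : x'.length - (α.ar - 1) = (x' ++ [a]).length - α.ar := by
      simp only [List.length_append, List.length_singleton]; omega
    rw [he]
    exact h2

/-- The sum of last-slice contributions. -/
def sliceSum (Γ : Set (GPred D)) (hfin : Γ.Finite) (n : ℕ) (c : GPred D → ℕ → ℕ → ℝ)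
    (s : ℕ) (x : List D) : ℝ :=
  ∑ ρ ∈ hfin.toFinset, ∑ i ∈ Finset.range (n+2),
    if Lam Γ n ρ i s ∧ (x.drop (i-1)).take ρ.ar ∈ ρ.s then c ρ i s else 0

lemma Fpart_eq_sum (Γ : Set (GPred D)) (hfin : Γ.Finite) (n : ℕ)
    (c : GPred D → ℕ → ℕ → ℝ) (s : ℕ) (x : List D) :
    Fpart Γ n c s x = ∑ ρ ∈ hfin.toFinset, ∑ i ∈ Finset.range (n+2),
      ∑ j ∈ Finset.range (n+1),
      if Lam Γ n ρ i j ∧ j ≤ s then fcost c ρ i j x else 0 := by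
  rw [Fpart, finsum_eq_sum_of_support_subset]
  · refine Finset.sum_congr rfl fun ρ _ => ?_
    rw [finsum_eq_sum_of_support_subset]
    · refine Finset.sum_congr rfl fun i _ => ?_
      rw [finsum_eq_sum_of_support_subset]
      intro j hj
      rw [Function.mem_support] at hj
      have hc : Lam Γ n ρ i j ∧ j ≤ s := by by_contra hc; exact hj (if_neg hc)
      have hjn := hc.1.2.2.1
      simp only [Finset.coe_range, Set.mem_Iio]
      omega
    · intro i hi
      rw [Function.mem_support] at hi
      have : i < n + 2 := by
        by_contra hgt
        apply hi
        apply finsum_eq_zero_of_forall_eq_zero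
        intro j
        apply if_neg
        rintro ⟨⟨-, hh1, hh2, hh3⟩, -⟩
        omega
      simpa using this
  · intro ρ hρ
    rw [Function.mem_support] at hρ
    have hΓ : ρ ∈ Γ := by
      by_contra hg
      apply hρ
      apply finsum_eq_zero_of_forall_eq_zero
      intro i
      apply finsum_eq_zero_of_forall_eq_zero
      intro j
      exact if_neg fun hcc => hg hcc.1.1
    simpa using hΓ

lemma phi_eq_sum (Γ : Set (GPred D)) (hfin : Γ.Finite) (n : ℕ)
    (c : GPred D → ℕ → ℕ → ℝ) (s : ℕ) (α : GPred D) :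
    phi Γ n c s α = ∑ ρ ∈ hfin.toFinset, ∑ i ∈ Finset.range (n+2),
      if ρ ∈ Γ ∧ pge ρ α ∧ Lam Γ n ρ i s then c ρ i s else 0 := by
  rw [phi, finsum_eq_sum_of_support_subset]
  · refine Finset.sum_congr rfl fun ρ _ => ?_
    rw [finsum_eq_sum_of_support_subset]
    intro i hi
    rw [Function.mem_support] at hi
    have hc : ρ ∈ Γ ∧ pge ρ α ∧ Lam Γ n ρ i s := by by_contra hc; exact hi (if_neg hc)
    obtain ⟨-, -, -, -, hh2, hh3⟩ := hc
    simp only [Finset.coe_range, Set.mem_Iio]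
    omega
  · intro ρ hρ
    rw [Function.mem_support] at hρ
    have hΓ : ρ ∈ Γ := by
      by_contra hg
      apply hρ
      apply finsum_eq_zero_of_forall_eq_zero
      intro i
      exact if_neg fun hcc => hg hcc.1
    simpa using hΓ

lemma fire_iff_star {ρ : GPred D} {i s : ℕ} (hi1 : 1 ≤ i) (hL : s + 1 = i + ρ.ar)
    {x : List D} (hx : x.length = s) :
    (x.drop (i-1)).take ρ.ar ∈ ρ.s ↔ x ∈ ρ.star := by
  have hlen : (x.drop (i-1)).length = ρ.ar := by rw [List.length_drop]; omega
  rw [List.take_of_length_le (le_of_eq hlen)]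
  have he : i - 1 = x.length - ρ.ar := by omega
  rw [he]
  constructor
  · intro h; exact ⟨by omega, h⟩
  · intro h; exact h.2

lemma Fpart_append (Γ : Set (GPred D)) (hfin : Γ.Finite) (n : ℕ)
    (c : GPred D → ℕ → ℕ → ℝ) (t : ℕ) (ht : t + 1 ≤ n)
    (x' : List D) (hx' : x'.length = t) (a : D) :
    Fpart Γ n c (t+1) (x' ++ [a])
      = Fpart Γ n c t x' + sliceSum Γ hfin n c (t+1) (x' ++ [a]) := by
  rw [Fpart_eq_sum Γ hfin n c (t+1), Fpart_eq_sum Γ hfin n c t, sliceSum,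
    ← Finset.sum_add_distrib]
  refine Finset.sum_congr rfl fun ρ _ => ?_
  rw [← Finset.sum_add_distrib]
  refine Finset.sum_congr rfl fun i _ => ?_
  have hsplit : ∀ j ∈ Finset.range (n+1),
      (if Lam Γ n ρ i j ∧ j ≤ t+1 then fcost c ρ i j (x' ++ [a]) else 0)
      = (if Lam Γ n ρ i j ∧ j ≤ t then fcost c ρ i j x' else 0)
        + (if j = t+1 ∧ Lam Γ n ρ i j ∧ ((x' ++ [a]).drop (i-1)).take ρ.ar ∈ ρ.s
            then c ρ i j else 0) := by
    intro j _
    by_cases hL : Lam Γ n ρ i j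
    · have hcopy := hL
      obtain ⟨-, hi1, hjn, hj1⟩ := hcopy
      by_cases hjt : j ≤ t
      · rw [if_pos ⟨hL, by omega⟩, if_pos ⟨hL, hjt⟩,
          if_neg (fun hh => absurd hh.1 (by omega)), add_zero]
        rw [fcost, fcost, List.drop_append_of_le_length (by omega)]
        have harr : ρ.ar ≤ (x'.drop (i-1)).length := by rw [List.length_drop]; omega
        rw [List.take_append_of_le_length harr]
      · by_cases hjt2 : j = t+1
        · subst hjt2
          rw [if_pos ⟨hL, le_refl _⟩, if_neg (fun hh => absurd hh.2 hjt), zero_add]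
          simp [fcost, hL]
        · rw [if_neg (fun hh => absurd hh.2 (by omega)),
            if_neg (fun hh => absurd hh.2 hjt),
            if_neg (fun hh => absurd hh.1 hjt2), add_zero]
    · rw [if_neg (fun hh => hL hh.1), if_neg (fun hh => hL hh.1),
        if_neg (fun hh => hL hh.2.1), add_zero]
  rw [Finset.sum_congr rfl hsplit, Finset.sum_add_distrib]
  congr 1
  rw [Finset.sum_eq_single (t+1)]
  · simp
  · intro j _ hne; exact if_neg fun hh => hne hh.1
  · intro hmem; exact absurd (Finset.mem_range.mpr (by omega)) hmem

lemma slice_le_phi (Γ : Set (GPred D)) (hfin : Γ.Finite) (n : ℕ)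
    (c : GPred D → ℕ → ℕ → ℝ) (hneg : ∀ ρ i j, Lam Γ n ρ i j → c ρ i j ≤ 0)
    (s : ℕ) (α : GPred D) {x : List D} (hx : x.length = s) (hxα : x ∈ α.star) :
    sliceSum Γ hfin n c s x ≤ phi Γ n c s α := by
  rw [sliceSum, phi_eq_sum Γ hfin n c s α]
  refine Finset.sum_le_sum fun ρ _ => Finset.sum_le_sum fun i _ => ?_
  by_cases hP : ρ ∈ Γ ∧ pge ρ α ∧ Lam Γ n ρ i s
  · have hfire := (fire_iff_star hP.2.2.2.1 hP.2.2.2.2.2 hx).mpr (hP.2.1 hxα)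
    rw [if_pos ⟨hP.2.2, hfire⟩, if_pos hP]
  · rw [if_neg hP]
    by_cases hQ : Lam Γ n ρ i s ∧ (x.drop (i-1)).take ρ.ar ∈ ρ.s
    · rw [if_pos hQ]; exact hneg ρ i s hQ.1
    · rw [if_neg hQ]

lemma slice_eq_phi (Γ : Set (GPred D)) (hfin : Γ.Finite) (n : ℕ)
    (c : GPred D → ℕ → ℕ → ℝ) (s : ℕ) (α : GPred D) (hα : α ∈ piClosure Γ)
    {x : List D} (hx : x.length = s) (hxα : x ∈ α.star)
    (hmax : ∀ β ∈ piClosure Γ, pgt α β → x ∉ β.star) :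
    sliceSum Γ hfin n c s x = phi Γ n c s α := by
  rw [sliceSum, phi_eq_sum Γ hfin n c s α]
  refine Finset.sum_congr rfl fun ρ _ => Finset.sum_congr rfl fun i _ => ?_
  refine if_congr ?_ rfl rfl
  constructor
  · rintro ⟨hL, hfire⟩
    refine ⟨hL.1, ?_, hL⟩
    have hxρ : x ∈ ρ.star := (fire_iff_star hL.2.1 hL.2.2.2 hx).mp hfire
    by_contra hng
    have hbar : α.bar ρ ∈ piClosure Γ :=
      interClosed_piClosure Γ α hα ρ (subset_piClosure Γ hL.1)
    have hstar : (α.bar ρ).star = α.star ∩ ρ.star := star_bar α ρ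
    have hxbar : x ∈ (α.bar ρ).star := by rw [hstar]; exact ⟨hxα, hxρ⟩
    have hpge : pge α (α.bar ρ) := by
      intro y hy; rw [hstar] at hy; exact hy.1
    have hne : α ≠ α.bar ρ := by
      intro heq
      apply hng
      intro y hy
      have hyb : y ∈ (α.bar ρ).star := by rw [← heq]; exact hy
      rw [hstar] at hyb
      exact hyb.2
    exact hmax _ hbar ⟨hpge, hne⟩ hxbar
  · rintro ⟨hΓ, hpge, hL⟩
    exact ⟨hL, (fire_iff_star hL.2.1 hL.2.2.2 hx).mpr (hpge hxα)⟩

lemma exists_hasse [Fintype D] (Γ : Set (GPred D)) {α : GPred D} {x : List D}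
    (hα : α ∈ piClosure Γ)
    (hx : ∃ β ∈ piClosure Γ, pgt α β ∧ x ∈ β.star) :
    ∃ γ, HasseGe (piClosure Γ) α γ ∧ x ∈ γ.star := by
  have hS : {γ : GPred D | γ ∈ piClosure Γ ∧ pgt α γ ∧ x ∈ γ.star}.Finite :=
    (finite_ar_le D x.length).subset fun γ hγ => hγ.2.2.1
  obtain ⟨β, hβ1, hβ2, hβ3⟩ := hx
  obtain ⟨γ, hγS, hmaxγ⟩ :=
    Set.Finite.exists_maximalFor star _ hS ⟨β, hβ1, hβ2, hβ3⟩
  refine ⟨γ, ⟨hα, hγS.1, hγS.2.1, ?_⟩, hγS.2.2⟩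
  rintro ⟨δ, hδG, hαδ, hδγ⟩
  have hδS : δ ∈ {γ : GPred D | γ ∈ piClosure Γ ∧ pgt α γ ∧ x ∈ γ.star} :=
    ⟨hδG, hαδ, hδγ.1 hγS.2.2⟩
  have heq : γ.star = δ.star := le_antisymm hδγ.1 (hmaxγ hδS hδγ.1)
  exact hδγ.2 (eq_of_star_eq heq.symm ⟨x, hδS.2.2⟩)

/-- for nonpositive weights, the DP values satisfy
`W_s(α) = min{ min_{(α,β) ∈ Hasse(closure(Γ^∩), ≥)} W_s(β), W_{s-1}(α⁻) + φ_s(α) }`. -/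
theorem W_recurrence [Fintype D] (Γ : Set (GPred D)) (hfin : Γ.Finite)
    (n : ℕ) (c : GPred D → ℕ → ℕ → ℝ)
    (hneg : ∀ ρ i j, Lam Γ n ρ i j → c ρ i j ≤ 0) :
    ∀ α ∈ piClosure Γ, 1 ≤ α.ar → ∀ s : ℕ, 1 ≤ s → s ≤ n →
      W Γ n c s α =
        min (sInf {z : EReal | ∃ β : GPred D, HasseGe (piClosure Γ) α β ∧ z = W Γ n c s β})
            (W Γ n c (s - 1) α.minus + ((phi Γ n c s α : ℝ) : EReal)) := by
  intro α hα har s hs hsn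
  obtain ⟨t, rfl⟩ : ∃ t, s = t + 1 := ⟨s - 1, by omega⟩
  simp only [Nat.add_sub_cancel]
  apply le_antisymm
  · refine le_min (le_sInf ?_) ?_
    · rintro z ⟨β, hβ, rfl⟩
      exact W_mono hβ.2.2.1.1
    · by_cases hne : ∃ x' : List D, x'.length = t ∧ x' ∈ α.minus.star
      · obtain ⟨x', hx'l, hx'm, hx'W⟩ := W_attained Γ n c t α.minus hne
        obtain ⟨a, hax⟩ := exists_extension har hx'm
        have key := Fpart_append Γ hfin n c t hsn x' hx'l a
        have hsl := slice_le_phi Γ hfin n c hneg (t+1) α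
          (x := x' ++ [a]) (by simp [hx'l]) hax
        calc W Γ n c (t+1) α ≤ ((Fpart Γ n c (t+1) (x' ++ [a]) : ℝ) : EReal) :=
              W_le (by simp [hx'l]) hax
          _ = ((Fpart Γ n c t x' : ℝ) : EReal)
              + ((sliceSum Γ hfin n c (t+1) (x' ++ [a]) : ℝ) : EReal) := by
              rw [key, EReal.coe_add]
          _ ≤ ((Fpart Γ n c t x' : ℝ) : EReal) + ((phi Γ n c (t+1) α : ℝ) : EReal) :=
              add_le_add_right (EReal.coe_le_coe_iff.2 hsl) _
          _ = W Γ n c t α.minus + ((phi Γ n c (t+1) α : ℝ) : EReal) := by rw [hx'W]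
      · have hempty : {z : EReal | ∃ x : List D, x.length = t ∧ x ∈ α.minus.star ∧
            z = ((Fpart Γ n c t x : ℝ) : EReal)} = ∅ := by
          ext z
          simp only [Set.mem_setOf_eq, Set.mem_empty_iff_false, iff_false]
          rintro ⟨x, h1, h2, -⟩
          exact hne ⟨x, h1, h2⟩
        have hW : W Γ n c t α.minus = ⊤ := by rw [W, hempty, sInf_empty]
        rw [hW, EReal.top_add_coe]
        exact le_top
  · by_cases hne : ∃ x : List D, x.length = t + 1 ∧ x ∈ α.star
    · obtain ⟨x, hxl, hxm, hxW⟩ := W_attained Γ n c (t+1) α hne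
      by_cases hβ : ∃ β ∈ piClosure Γ, pgt α β ∧ x ∈ β.star
      · obtain ⟨γ, hH, hxγ⟩ := exists_hasse Γ hα hβ
        refine le_trans (min_le_left _ _) (le_trans (sInf_le ⟨γ, hH, rfl⟩) ?_)
        rw [hxW]
        exact W_le hxl hxγ
      · push_neg at hβ
        have hxne : x ≠ [] := by rintro rfl; simp at hxl
        obtain ⟨x', a, rfl⟩ : ∃ x' a, x = x' ++ [a] :=
          ⟨x.dropLast, x.getLast hxne, (List.dropLast_append_getLast hxne).symm⟩
        have hx'l : x'.length = t := by
          simp only [List.length_append, List.length_singleton] at hxl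
          omega
        have key := Fpart_append Γ hfin n c t hsn x' hx'l a
        have hslice := slice_eq_phi Γ hfin n c (t+1) α hα hxl hxm hβ
        have hx'm : x' ∈ α.minus.star := mem_minus_star har hxm
        refine le_trans (min_le_right _ _) ?_
        rw [hxW, key, hslice, EReal.coe_add]
        exact add_le_add_left (W_le hx'l hx'm) _
    · have hempty : {z : EReal | ∃ x : List D, x.length = t + 1 ∧ x ∈ α.star ∧
          z = ((Fpart Γ n c (t+1) x : ℝ) : EReal)} = ∅ := by
        ext z
        simp only [Set.mem_setOf_eq, Set.mem_empty_iff_false, iff_false]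
        rintro ⟨x, h1, h2, -⟩
        exact hne ⟨x, h1, h2⟩
      have hW : W Γ n c (t+1) α = ⊤ := by rw [W, hempty, sInf_empty]
      rw [hW]
      exact le_top

end GPred
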